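/- Theorem 2, almost-sure consistency with covariate adjustment: assume Fisher's sharp null, i.e. Y i true = Y i false for every unit i. Let G : Ω → (I → Option ℝ) → (I → ℝ) be a deterministic imputation algorithm, H : (I → ℝ) → (I → ℝ) a deterministic covariate-adjustment prediction model, res z ystar := fun i => G z ystar i - H (G z ystar) i the residual vector, T : Ω → (I → ℝ) → ℝ a test statistic, z₀ ∈ Ω the observed assignment, t := T z₀ (res z₀ (Ystar z₀)), and p_adj := (𝒫.toMeasure {z | T z (res z (Ystar z)) ≥ t}).toReal the finite-population-exact covariate-adjusted p-value. For L ≥ 1 define p̂_adj L := (1/L) * ∑_{l=0}^{L-1} indicator {ω | T (Z l ω) (res (Z l ω) (Ystar z₀)) ≥ t}. Then p̂_adj L converges to p_adj μ-almost surely as L → ∞. -/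

import Mathlib

open MeasureTheory ProbabilityTheory Filter

/-- Theorem 2, almost-sure consistency with covariate adjustment. -/
theorem theorem2_as_consistency_covariate_adjustment
    {Ω : Type*} [Fintype Ω] [Nonempty Ω] [MeasurableSpace Ω] [MeasurableSingletonClass Ω]
    {I : Type*} [Fintype I]
    {Ω' : Type*} [MeasurableSpace Ω'] (μ : Measure Ω') [IsProbabilityMeasure μ]
    (P : PMF Ω)                       -- randomization distribution (Assumption 1)
    (arm : Ω → I → Bool)              -- treatment arm of each unit under each assignment
    (Y : I → Bool → ℝ)                -- fixed potential outcomes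
    (η : (I → ℝ) → (I → Bool))        -- missingness mechanism (Assumption 2)
    (Yobs : Ω → I → ℝ)
    (hYobs : ∀ z i, Yobs z i = Y i (arm z i))
    (Mis : Ω → I → Bool)
    (hMis : ∀ z, Mis z = η (Yobs z))
    (Ystar : Ω → I → Option ℝ)
    (hYstar : ∀ z i, Ystar z i = if Mis z i then none else some (Yobs z i))
    (hnull : ∀ i, Y i true = Y i false)   -- Fisher's sharp null
    (G : Ω → (I → Option ℝ) → (I → ℝ))    -- deterministic imputation algorithm
    (H : (I → ℝ) → (I → ℝ))               -- deterministic covariate-adjustment model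
    (res : Ω → (I → Option ℝ) → (I → ℝ))  -- residual vector
    (hres : ∀ z ystar i, res z ystar i = G z ystar i - H (G z ystar) i)
    (T : Ω → (I → ℝ) → ℝ)                 -- test statistic
    (z₀ : Ω)                              -- observed assignment
    (Z : ℕ → Ω' → Ω)                      -- Monte Carlo re-randomization draws
    (hZmeas : ∀ l, Measurable (Z l))
    (hZlaw : ∀ l, μ.map (Z l) = P.toMeasure)             -- identically distributed with law P
    (hZindep : iIndepFun Z μ)   -- independent
    (t : ℝ) (ht : t = T z₀ (res z₀ (Ystar z₀)))          -- observed statistic value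
    (padj : ℝ)
    (hpadj : padj = (P.toMeasure {z | T z (res z (Ystar z)) ≥ t}).toReal)  -- exact p-value
    (phatadj : ℕ → Ω' → ℝ)
    (hphatadj : ∀ L ω, phatadj L ω =
      (1 / (L : ℝ)) * ∑ l ∈ Finset.range L,
        (if T (Z l ω) (res (Z l ω) (Ystar z₀)) ≥ t then (1 : ℝ) else 0)) :
    ∀ᵐ ω ∂μ, Tendsto (fun L => phatadj L ω) atTop (nhds padj) := by
  classical
  have hYeq : ∀ z, Ystar z = Ystar z₀ := by
    have hYobs' : ∀ z, Yobs z = Yobs z₀ := by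
      intro z; funext i
      rw [hYobs, hYobs]
      cases arm z i <;> cases arm z₀ i <;> simp [hnull i]
    intro z; funext i
    rw [hYstar, hYstar, hMis, hMis, hYobs' z]
  set f : Ω → ℝ := fun z => if T z (res z (Ystar z₀)) ≥ t then (1:ℝ) else 0 with hf
  have hfmeas : Measurable f := measurable_of_countable f
  set X : ℕ → Ω' → ℝ := fun l ω => f (Z l ω) with hX
  have hXmeas : ∀ l, Measurable (X l) := fun l => hfmeas.comp (hZmeas l)
  have hint : Integrable (X 0) μ := by
    apply Integrable.mono' (integrable_const (1:ℝ)) (hXmeas 0).aestronglyMeasurable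
    filter_upwards with ω
    simp only [hX, hf]
    split <;> simp
  have hindep : Pairwise (Function.onFun (IndepFun · · μ) X) := by
    intro i j hij
    exact (hZindep.indepFun hij).comp hfmeas hfmeas
  have hident : ∀ l, IdentDistrib (X l) (X 0) μ μ := by
    intro l
    refine ⟨(hXmeas l).aemeasurable, (hXmeas 0).aemeasurable, ?_⟩
    show Measure.map (f ∘ Z l) μ = Measure.map (f ∘ Z 0) μ
    rw [← Measure.map_map hfmeas (hZmeas l), ← Measure.map_map hfmeas (hZmeas 0),
      hZlaw l, hZlaw 0]
  have key := ProbabilityTheory.strong_law_ae_real X hint hindep hident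
  have hmean : (μ[X 0]) = padj := by
    have : (μ[X 0]) = ∫ z, f z ∂(μ.map (Z 0)) := by
      rw [integral_map (hZmeas 0).aemeasurable hfmeas.aestronglyMeasurable]
    rw [this, hZlaw 0, hpadj, hf]
    have hs : MeasurableSet {z : Ω | T z (res z (Ystar z₀)) ≥ t} :=
      MeasurableSet.of_discrete
    rw [show (fun z : Ω => if T z (res z (Ystar z₀)) ≥ t then (1:ℝ) else 0)
        = Set.indicator {z | T z (res z (Ystar z₀)) ≥ t} (fun _ => (1:ℝ)) by
      ext z; simp [Set.indicator_apply]]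
    rw [integral_indicator_const _ hs]
    have : {z : Ω | T z (res z (Ystar z)) ≥ t} = {z | T z (res z (Ystar z₀)) ≥ t} := by
      ext z; simp [hYeq z]
    rw [this]
    rw [smul_eq_mul, mul_one, measureReal_def]
  filter_upwards [key] with ω hω
  rw [← hmean]
  have : (fun L => phatadj L ω) = fun n : ℕ => (∑ i ∈ Finset.range n, X i ω) / n := by
    ext n
    rw [hphatadj]
    simp [hX, hf]
    ring
  rw [this]
  exact hω
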